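/- Let L ≥ 2 be an integer, N = 2^L, ℓ ∈ {1,…,L−1}, and let X_1, …, X_ℓ ∈ ℂ^{N×N} satisfy supp(X_p) ⊆ supp(S_p) for every p ∈ {1,…,ℓ}, where S_p := I_{2^{p−1}} ⊗ J_2 ⊗ I_{N/2^p}. Then supp(X_1 X_2 ⋯ X_ℓ) ⊆ supp(J_{2^ℓ} ⊗ I_{N/2^ℓ}). -/

import Mathlib

open Matrix Kronecker

/-- The `n × n` all-ones matrix `J_n`. -/
def Jmat (n : ℕ) : Matrix (Fin n) (Fin n) ℂ := Matrix.of fun _ _ => 1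

lemma two_pow_div (L ℓ : ℕ) (h : ℓ ≤ L) : 2 ^ L / 2 ^ ℓ = 2 ^ (L - ℓ) :=
  Nat.pow_div h (by norm_num)

lemma two_pow_mul_div (L ℓ : ℕ) (h : ℓ ≤ L) : 2 ^ ℓ * (2 ^ L / 2 ^ ℓ) = 2 ^ L :=
  Nat.mul_div_cancel' (pow_dvd_pow 2 h)

lemma bfly_dim (L ℓ : ℕ) (h1 : 1 ≤ ℓ) (h2 : ℓ ≤ L) :
    2 ^ (ℓ - 1) * (2 * (2 ^ L / 2 ^ ℓ)) = 2 ^ L := by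
  rw [two_pow_div L ℓ h2, show (2 : ℕ) * 2 ^ (L - ℓ) = 2 ^ (L - ℓ + 1) by rw [pow_succ]; ring,
    ← pow_add]
  congr 1
  omega

/-- Reindexing equivalence `Fin 2^(ℓ-1) × (Fin 2 × Fin (2^L/2^ℓ)) ≃ Fin 2^L`,
sending `(a, (b, c))` to the lexicographic index `a·(2·2^L/2^ℓ) + b·(2^L/2^ℓ) + c`. -/
def bflyEquiv (L ℓ : ℕ) (h1 : 1 ≤ ℓ) (h2 : ℓ ≤ L) :
    Fin (2 ^ (ℓ - 1)) × (Fin 2 × Fin (2 ^ L / 2 ^ ℓ)) ≃ Fin (2 ^ L) :=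
  ((Equiv.refl _).prodCongr finProdFinEquiv).trans
    (finProdFinEquiv.trans (finCongr (bfly_dim L ℓ h1 h2)))

/-- The butterfly support `S_ℓ = I_{2^{ℓ-1}} ⊗ J_2 ⊗ I_{N/2^ℓ}`, as an `N × N` matrix,
`N = 2^L`. -/
def bflySupp (L ℓ : ℕ) (h1 : 1 ≤ ℓ) (h2 : ℓ ≤ L) : Matrix (Fin (2 ^ L)) (Fin (2 ^ L)) ℂ :=
  Matrix.reindex (bflyEquiv L ℓ h1 h2) (bflyEquiv L ℓ h1 h2)
    ((1 : Matrix (Fin (2 ^ (ℓ - 1))) (Fin (2 ^ (ℓ - 1))) ℂ) ⊗ₖ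
      (Jmat 2 ⊗ₖ (1 : Matrix (Fin (2 ^ L / 2 ^ ℓ)) (Fin (2 ^ L / 2 ^ ℓ)) ℂ)))

/-- Reindexing equivalence `Fin 2^ℓ × Fin (2^L/2^ℓ) ≃ Fin 2^L` (lexicographic). -/
def blockEquiv (L ℓ : ℕ) (h : ℓ ≤ L) : Fin (2 ^ ℓ) × Fin (2 ^ L / 2 ^ ℓ) ≃ Fin (2 ^ L) :=
  finProdFinEquiv.trans (finCongr (two_pow_mul_div L ℓ h))

/-- The matrix `J_{2^ℓ} ⊗ I_{N/2^ℓ}`, as an `N × N` matrix, `N = 2^L`. -/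
def JkronI (L ℓ : ℕ) (h : ℓ ≤ L) : Matrix (Fin (2 ^ L)) (Fin (2 ^ L)) ℂ :=
  Matrix.reindex (blockEquiv L ℓ h) (blockEquiv L ℓ h)
    (Jmat (2 ^ ℓ) ⊗ₖ (1 : Matrix (Fin (2 ^ L / 2 ^ ℓ)) (Fin (2 ^ L / 2 ^ ℓ)) ℂ))

/-- The matrix `I_{2^ℓ} ⊗ J_{N/2^ℓ}`, as an `N × N` matrix, `N = 2^L`. -/
def IkronJ (L ℓ : ℕ) (h : ℓ ≤ L) : Matrix (Fin (2 ^ L)) (Fin (2 ^ L)) ℂ :=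
  Matrix.reindex (blockEquiv L ℓ h) (blockEquiv L ℓ h)
    ((1 : Matrix (Fin (2 ^ ℓ)) (Fin (2 ^ ℓ)) ℂ) ⊗ₖ Jmat (2 ^ L / 2 ^ ℓ))

/-- The `k`-th element of the canonical row index set `R^(ℓ)_i` (0-based):
`i + k·(N/2^ℓ)`, for `i ∈ Fin (N/2^ℓ)`, `k ∈ Fin 2^ℓ`, `N = 2^L`. -/
def rowIdx (L ℓ : ℕ) (h : ℓ ≤ L) (i : Fin (2 ^ L / 2 ^ ℓ)) (k : Fin (2 ^ ℓ)) : Fin (2 ^ L) :=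
  ⟨(i : ℕ) + (k : ℕ) * (2 ^ L / 2 ^ ℓ), by
    have hi := i.isLt
    have hk := k.isLt
    calc (i : ℕ) + (k : ℕ) * (2 ^ L / 2 ^ ℓ)
        < 2 ^ L / 2 ^ ℓ + (k : ℕ) * (2 ^ L / 2 ^ ℓ) := by omega
      _ = ((k : ℕ) + 1) * (2 ^ L / 2 ^ ℓ) := by ring
      _ ≤ 2 ^ ℓ * (2 ^ L / 2 ^ ℓ) := Nat.mul_le_mul_right _ (by omega)
      _ = 2 ^ L := two_pow_mul_div L ℓ h⟩

/-- The `k`-th element of the canonical column index set `C^(ℓ)_j` (0-based):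
`j·(N/2^ℓ) + k`, for `j ∈ Fin 2^ℓ`, `k ∈ Fin (N/2^ℓ)`, `N = 2^L`. -/
def colIdx (L ℓ : ℕ) (h : ℓ ≤ L) (j : Fin (2 ^ ℓ)) (k : Fin (2 ^ L / 2 ^ ℓ)) : Fin (2 ^ L) :=
  ⟨(j : ℕ) * (2 ^ L / 2 ^ ℓ) + (k : ℕ), by
    have hj := j.isLt
    have hk := k.isLt
    calc (j : ℕ) * (2 ^ L / 2 ^ ℓ) + (k : ℕ)
        < (j : ℕ) * (2 ^ L / 2 ^ ℓ) + (2 ^ L / 2 ^ ℓ) := by omega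
      _ = ((j : ℕ) + 1) * (2 ^ L / 2 ^ ℓ) := by ring
      _ ≤ 2 ^ ℓ * (2 ^ L / 2 ^ ℓ) := Nat.mul_le_mul_right _ (by omega)
      _ = 2 ^ L := two_pow_mul_div L ℓ h⟩

/-- The squared Frobenius norm `‖A‖_F²` of a complex matrix. -/
noncomputable def frobSq {m n : Type*} [Fintype m] [Fintype n] (A : Matrix m n ℂ) : ℝ :=
  ∑ i, ∑ j, ‖A i j‖ ^ 2


lemma bflyEquiv_val (L ℓ : ℕ) (h1 : 1 ≤ ℓ) (h2 : ℓ ≤ L)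
    (x : Fin (2 ^ (ℓ - 1)) × (Fin 2 × Fin (2 ^ L / 2 ^ ℓ))) :
    ((bflyEquiv L ℓ h1 h2 x : ℕ))
    = (x.2.2 : ℕ) + (2 ^ L / 2 ^ ℓ) * ((x.2.1 : ℕ) + 2 * (x.1 : ℕ)) := by
  simp [bflyEquiv, finProdFinEquiv, Equiv.prodCongr]
  ring

lemma blockEquiv_val (L ℓ : ℕ) (h : ℓ ≤ L) (x : Fin (2 ^ ℓ) × Fin (2 ^ L / 2 ^ ℓ)) :
    ((blockEquiv L ℓ h x : ℕ)) = (x.2 : ℕ) + (2 ^ L / 2 ^ ℓ) * (x.1 : ℕ) := by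
  simp [blockEquiv, finProdFinEquiv]

lemma bflySupp_mod (L q : ℕ) (h1 : 1 ≤ q) (h2 : q ≤ L) (a b : Fin (2 ^ L))
    (h : bflySupp L q h1 h2 a b ≠ 0) :
    (a : ℕ) % (2 ^ L / 2 ^ q) = (b : ℕ) % (2 ^ L / 2 ^ q) := by
  set e := bflyEquiv L q h1 h2
  set u := e.symm a with hu
  set v := e.symm b with hv
  have hne : ((1 : Matrix (Fin (2 ^ (q - 1))) (Fin (2 ^ (q - 1))) ℂ) ⊗ₖ
      (Jmat 2 ⊗ₖ (1 : Matrix (Fin (2 ^ L / 2 ^ q)) (Fin (2 ^ L / 2 ^ q)) ℂ))) u v ≠ 0 := by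
    simpa [bflySupp, Matrix.reindex_apply, Matrix.submatrix_apply] using h
  rw [Matrix.kroneckerMap_apply, Matrix.kroneckerMap_apply] at hne
  have h1' : (1 : Matrix (Fin (2 ^ (q - 1))) (Fin (2 ^ (q - 1))) ℂ) u.1 v.1 ≠ 0 :=
    fun hz => hne (by rw [hz]; ring)
  have h3' : (1 : Matrix (Fin (2 ^ L / 2 ^ q)) (Fin (2 ^ L / 2 ^ q)) ℂ) u.2.2 v.2.2 ≠ 0 :=
    fun hz => hne (by rw [hz]; ring)
  have hg : u.2.2 = v.2.2 := by
    by_contra hc; exact h3' (Matrix.one_apply_ne hc)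
  have ha : a = e u := by rw [hu, Equiv.apply_symm_apply]
  have hb : b = e v := by rw [hv, Equiv.apply_symm_apply]
  have hav : (a : ℕ) = (u.2.2 : ℕ) + (2 ^ L / 2 ^ q) * ((u.2.1 : ℕ) + 2 * (u.1 : ℕ)) := by
    rw [ha]; exact bflyEquiv_val L q h1 h2 u
  have hbv : (b : ℕ) = (v.2.2 : ℕ) + (2 ^ L / 2 ^ q) * ((v.2.1 : ℕ) + 2 * (v.1 : ℕ)) := by
    rw [hb]; exact bflyEquiv_val L q h1 h2 v
  have hlt : (u.2.2 : ℕ) < 2 ^ L / 2 ^ q := u.2.2.isLt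
  have hlt' : (v.2.2 : ℕ) < 2 ^ L / 2 ^ q := v.2.2.isLt
  rw [hav, hbv, Nat.add_mul_mod_self_left, Nat.add_mul_mod_self_left,
    Nat.mod_eq_of_lt hlt, Nat.mod_eq_of_lt hlt', hg]

lemma JkronI_ne (L ℓ : ℕ) (h : ℓ ≤ L) (a b : Fin (2 ^ L))
    (hab : (a : ℕ) % (2 ^ L / 2 ^ ℓ) = (b : ℕ) % (2 ^ L / 2 ^ ℓ)) :
    JkronI L ℓ h a b ≠ 0 := by
  set e := blockEquiv L ℓ h
  set u := e.symm a with hu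
  set v := e.symm b with hv
  have ha : a = e u := by rw [hu, Equiv.apply_symm_apply]
  have hb : b = e v := by rw [hv, Equiv.apply_symm_apply]
  have hav : (a : ℕ) = (u.2 : ℕ) + (2 ^ L / 2 ^ ℓ) * (u.1 : ℕ) := by
    rw [ha]; exact blockEquiv_val L ℓ h u
  have hbv : (b : ℕ) = (v.2 : ℕ) + (2 ^ L / 2 ^ ℓ) * (v.1 : ℕ) := by
    rw [hb]; exact blockEquiv_val L ℓ h v
  have hg : u.2 = v.2 := by
    have := hab
    rw [hav, hbv, Nat.add_mul_mod_self_left, Nat.add_mul_mod_self_left,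
      Nat.mod_eq_of_lt u.2.isLt, Nat.mod_eq_of_lt v.2.isLt] at this
    exact Fin.ext this
  have : JkronI L ℓ h a b = 1 := by
    simp [JkronI, Matrix.reindex_apply, Matrix.submatrix_apply, ← hu, ← hv,
      Matrix.kroneckerMap_apply, Jmat, hg, Matrix.one_apply]
    exact hg
  rw [this]; exact one_ne_zero

lemma mul_supp_exists {n : Type*} [Fintype n] (A B : Matrix n n ℂ) (a b : n)
    (h : (A * B) a b ≠ 0) : ∃ c, A a c ≠ 0 ∧ B c b ≠ 0 := by
  rw [Matrix.mul_apply] at h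
  obtain ⟨c, hc⟩ := Finset.exists_ne_zero_of_sum_ne_zero h
  exact ⟨c, fun hz => hc.2 (by rw [hz]; ring), fun hz => hc.2 (by rw [hz]; ring)⟩

lemma key_mod (L : ℕ) : ∀ ℓ (_ : 1 ≤ ℓ) (hℓL : ℓ ≤ L),
    ∀ X : Fin ℓ → Matrix (Fin (2 ^ L)) (Fin (2 ^ L)) ℂ,
    (∀ p : Fin ℓ, ∀ a b, X p a b ≠ 0 →
      bflySupp L ((p : ℕ) + 1) (by omega : 0 < (p : ℕ) + 1) (by have := p.isLt; omega) a b ≠ 0) →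
    ∀ a b, (List.ofFn X).prod a b ≠ 0 →
      (a : ℕ) % (2 ^ L / 2 ^ ℓ) = (b : ℕ) % (2 ^ L / 2 ^ ℓ) := by
  intro ℓ
  induction ℓ with
  | zero => omega
  | succ n ih =>
    intro _ hle X hX a b hprod
    rcases Nat.eq_zero_or_pos n with hn | hn
    · subst hn
      have : (List.ofFn X).prod = X 0 := by
        simp [List.ofFn_succ]
      rw [this] at hprod
      exact bflySupp_mod L 1 le_rfl (by omega) a b (hX 0 a b hprod)
    · have hsplit : (List.ofFn X).prod =
          (List.ofFn fun i : Fin n => X i.castSucc).prod * X (Fin.last n) := by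
        rw [List.ofFn_succ', List.prod_concat]
      rw [hsplit] at hprod
      obtain ⟨c, hAc, hBc⟩ := mul_supp_exists _ _ a b hprod
      have hih := ih hn (by omega) (fun i => X i.castSucc)
        (fun p a b hpab => by
          have := hX p.castSucc a b hpab
          simpa using this) a c hAc
      have hlast : (c : ℕ) % (2 ^ L / 2 ^ (n + 1)) = (b : ℕ) % (2 ^ L / 2 ^ (n + 1)) := by
        have := hX (Fin.last n) c b hBc
        simpa using bflySupp_mod L (n + 1) (by omega) hle c b this
      have hdvd : 2 ^ L / 2 ^ (n + 1) ∣ 2 ^ L / 2 ^ n := by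
        rw [two_pow_div L (n+1) hle, two_pow_div L n (by omega)]
        exact pow_dvd_pow 2 (by omega)
      have hac : (a : ℕ) % (2 ^ L / 2 ^ (n + 1)) = (c : ℕ) % (2 ^ L / 2 ^ (n + 1)) :=
        (Nat.ModEq.of_dvd hdvd hih : _)
      omega

/-- For `L ≥ 2`, `N = 2^L`, `ℓ ∈ {1,…,L-1}`: if `X_1, …, X_ℓ ∈ ℂ^{N×N}`
satisfy `supp(X_p) ⊆ supp(S_p)` for every `p ∈ {1,…,ℓ}`, then
`supp(X_1 X_2 ⋯ X_ℓ) ⊆ supp(J_{2^ℓ} ⊗ I_{N/2^ℓ})`. -/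
theorem supp_prod_left_subset (L : ℕ) (hL : 2 ≤ L) (ℓ : ℕ) (hℓ1 : 1 ≤ ℓ) (hℓ2 : ℓ ≤ L - 1)
    (X : Fin ℓ → Matrix (Fin (2 ^ L)) (Fin (2 ^ L)) ℂ)
    (hX : ∀ p : Fin ℓ, ∀ a b, X p a b ≠ 0 →
      bflySupp L ((p : ℕ) + 1) (by omega) (by have := p.isLt; omega) a b ≠ 0) :
    ∀ a b, (List.ofFn X).prod a b ≠ 0 → JkronI L ℓ (by omega) a b ≠ 0 := by
  intro a b hprod
  exact JkronI_ne L ℓ (by omega) a b (key_mod L ℓ hℓ1 (by omega) X hX a b hprod)
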